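/- The simple game on voters {1,...,6} with A={1,2}, B={3,4,5,6}, defined by v(S)=1 iff |S|≥3 and |S∩A|≥1, is a complete simple game but is not weighted. -/
import Mathlib


open Finset

def IsSimpleGame {n : ℕ} (v : Finset (Fin n) → ℕ) : Prop :=
  (∀ S, v S = 0 ∨ v S = 1) ∧ (∀ S T : Finset (Fin n), S ⊆ T → v S ≤ v T) ∧
    (∃ S, v S = 0) ∧ (∃ S, v S = 1)

def IsWeighted {n : ℕ} (v : Finset (Fin n) → ℕ) : Prop :=
  ∃ (w : Fin n → ℝ) (q : ℝ), (∀ i, 0 ≤ w i) ∧ 0 < q ∧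
    ∀ S : Finset (Fin n), v S = 1 ↔ q ≤ ∑ i ∈ S, w i

noncomputable def wg {n : ℕ} (q : ℝ) (w : Fin n → ℝ) (S : Finset (Fin n)) : ℕ :=
  if q ≤ ∑ i ∈ S, w i then 1 else 0

def Dominates {n : ℕ} (v : Finset (Fin n) → ℕ) (i j : Fin n) : Prop :=
  ∀ S : Finset (Fin n), i ∉ S → j ∉ S → v (insert j S) ≤ v (insert i S)

noncomputable def SSI {n : ℕ} (v : Finset (Fin n) → ℕ) (i : Fin n) : ℝ :=
  ∑ S ∈ (univ.erase i).powerset,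
    ((S.card.factorial * (n - S.card - 1).factorial : ℕ) : ℝ) / (n.factorial : ℝ) *
      ((v (insert i S) : ℝ) - (v S : ℝ))

def eta {n : ℕ} (v : Finset (Fin n) → ℕ) (i : Fin n) : ℤ :=
  ∑ S ∈ (univ.erase i).powerset, ((v (insert i S) : ℤ) - (v S : ℤ))

noncomputable def PBI {n : ℕ} (v : Finset (Fin n) → ℕ) (i : Fin n) : ℝ :=
  ((eta v i : ℤ) : ℝ) / ∑ j, ((eta v j : ℤ) : ℝ)

def v7 (S : Finset (Fin 6)) : ℕ :=
  if 3 ≤ S.card ∧ (S ∩ ({0,1} : Finset (Fin 6))).Nonempty then 1 else 0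

theorem stmt7 :
    (∀ i j : Fin 6, Dominates v7 i j ∨ Dominates v7 j i) ∧ ¬ IsWeighted v7 := by
  constructor
  · unfold Dominates
    decide
  · rintro ⟨w, q, hw, hq, h⟩
    have h1 := (h {0,2,3}).mp (by decide)
    have h2 := (h {1,4,5}).mp (by decide)
    have h3 : ¬ q ≤ ∑ i ∈ ({0,1} : Finset (Fin 6)), w i :=
      fun hle => absurd ((h _).mpr hle) (by decide)
    have h4 : ¬ q ≤ ∑ i ∈ ({2,3,4,5} : Finset (Fin 6)), w i :=
      fun hle => absurd ((h _).mpr hle) (by decide)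
    have e1 : ∑ i ∈ ({0,2,3} : Finset (Fin 6)), w i = w 0 + (w 2 + w 3) := by
      rw [Finset.sum_insert (by decide), Finset.sum_insert (by decide), Finset.sum_singleton]
    have e2 : ∑ i ∈ ({1,4,5} : Finset (Fin 6)), w i = w 1 + (w 4 + w 5) := by
      rw [Finset.sum_insert (by decide), Finset.sum_insert (by decide), Finset.sum_singleton]
    have e3 : ∑ i ∈ ({0,1} : Finset (Fin 6)), w i = w 0 + w 1 := by
      rw [Finset.sum_insert (by decide), Finset.sum_singleton]
    have e4 : ∑ i ∈ ({2,3,4,5} : Finset (Fin 6)), w i = w 2 + (w 3 + (w 4 + w 5)) := by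
      rw [Finset.sum_insert (by decide), Finset.sum_insert (by decide),
        Finset.sum_insert (by decide), Finset.sum_singleton]
    rw [e1] at h1
    rw [e2] at h2
    rw [e3, not_le] at h3
    rw [e4, not_le] at h4
    linarith
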